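/- For all natural numbers m ≥ 1 and n ≥ 1 and every real α with 0 < α < π, the cotangent power sum S(m, n, α) = Σ_{k=0}^{n−1} cot^m((α + kπ)/n) equals the trace of the m-th power of the matrix cot α·J_n + B_n, i.e. Σ_{k=0}^{n−1} cot^m((α + kπ)/n) = Tr((cot α·J_n + B_n)^m). -/

import Mathlib

/-- `J n` is the `n × n` complex matrix all of whose entries equal `1`. -/
def J (n : ℕ) : Matrix (Fin n) (Fin n) ℂ := Matrix.of fun _ _ => 1

/-- `B n` is the `n × n` complex matrix with entries `i` above the diagonal,
`-i` below the diagonal and `0` on the diagonal. -/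
def B (n : ℕ) : Matrix (Fin n) (Fin n) ℂ :=
  Matrix.of fun j k => if j < k then Complex.I else if k < j then -Complex.I else 0

lemma cot_rel (β : ℝ) (hs : Real.sin β ≠ 0) :
    (Real.cot β : ℂ) * (Complex.exp (-(2*β) * Complex.I) - 1)
      = -Complex.I * (Complex.exp (-(2*β) * Complex.I) + 1) := by
  set u : ℂ := Complex.exp ((β:ℂ) * Complex.I) with hu_def
  have hu : u ≠ 0 := Complex.exp_ne_zero _
  have hsin : Complex.sin β ≠ 0 := by
    rw [← Complex.ofReal_sin]; exact_mod_cast hs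
  have hexpneg : Complex.exp (-(β:ℂ)*Complex.I) = u⁻¹ := by
    rw [hu_def, ← Complex.exp_neg]; ring_nf
  have hexp2 : Complex.exp (-(2*(β:ℂ)) * Complex.I) = u⁻¹ * u⁻¹ := by
    rw [← hexpneg, ← Complex.exp_add]; ring_nf
  have hcoseq : Complex.cos β = (u + u⁻¹)/2 := by
    have h := Complex.two_cos (β:ℂ)
    rw [hexpneg, ← hu_def] at h
    linear_combination h / 2
  have hsineq : Complex.sin β = (u⁻¹ - u) * Complex.I / 2 := by
    have h := Complex.two_sin (β:ℂ)
    rw [hexpneg, ← hu_def] at h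
    linear_combination h / 2
  rw [Real.cot_eq_cos_div_sin]
  push_cast
  rw [div_mul_eq_mul_div, div_eq_iff hsin, hcoseq, hsineq, hexp2]
  field_simp
  ring_nf
  linear_combination (1 - u^4) * Complex.I_sq

lemma entry_key (c t r p q : ℂ) (hr : r ≠ 1)
    (hc : c * (q - 1) = -Complex.I * (q + 1))
    (ht : t * (r - 1) = -Complex.I * (r + 1)) :
    (c - Complex.I) * ((p - 1) / (r - 1)) + c * p
      + (c + Complex.I) * ((q - p * r) / (r - 1)) = t * p := by
  have hr' : r - 1 ≠ 0 := sub_ne_zero.mpr hr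
  field_simp
  linear_combination hc - p * ht

theorem stmt_4 (m n : ℕ) (hm : 1 ≤ m) (hn : 1 ≤ n) (α : ℝ) (hα0 : 0 < α) (hαπ : α < Real.pi) :
    ((∑ k ∈ Finset.range n, Real.cot ((α + k * Real.pi) / n) ^ m : ℝ) : ℂ) =
      Matrix.trace (((Real.cot α : ℂ) • J n + B n) ^ m) := by
  have hn0 : (0:ℝ) < n := by exact_mod_cast hn
  set π := Real.pi with hπ
  have hπ0 : 0 < π := Real.pi_pos
  -- the angles
  set θ : Fin n → ℝ := fun k => (α + k * π) / n with hθ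
  have hθ0 : ∀ k : Fin n, 0 < θ k := by
    intro k
    apply div_pos _ hn0
    positivity
  have hθπ : ∀ k : Fin n, θ k < π := by
    intro k
    rw [div_lt_iff₀ hn0]
    have hk : (k:ℝ) ≤ (n:ℝ) - 1 := by
      have := k.isLt
      have : (k:ℝ) + 1 ≤ n := by exact_mod_cast this
      linarith
    nlinarith [hθ0 k]
  have hθsin : ∀ k : Fin n, Real.sin (θ k) ≠ 0 :=
    fun k => ne_of_gt (Real.sin_pos_of_pos_of_lt_pi (hθ0 k) (hθπ k))
  have hnθ : ∀ k : Fin n, (n:ℝ) * θ k = α + k * π := by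
    intro k; simp only [hθ]; field_simp
  -- eigenvalues and the roots
  set lam : Fin n → ℂ := fun k => ((Real.cot (θ k) : ℝ) : ℂ) with hlam
  set r : Fin n → ℂ := fun k => Complex.exp (-(2 * (θ k : ℝ)) * Complex.I) with hr
  set q : ℂ := Complex.exp (-(2 * (α:ℝ)) * Complex.I) with hq
  have hrn : ∀ k : Fin n, r k ^ n = q := by
    intro k
    rw [hr, ← Complex.exp_nat_mul]
    rw [hq]
    rw [Complex.exp_eq_exp_iff_exists_int]
    refine ⟨-(k:ℤ), ?_⟩
    have : ((n:ℝ) * θ k : ℝ) = α + k * π := hnθ k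
    have hcast : ((n:ℂ)) * ((θ k : ℝ):ℂ) = (α:ℂ) + (k:ℂ) * (π:ℂ) := by
      exact_mod_cast congrArg (fun x : ℝ => (x:ℂ)) this
    push_cast
    linear_combination (-2 * Complex.I) * hcast
  have hr1 : ∀ k : Fin n, r k ≠ 1 := by
    intro k h
    rw [hr] at h
    rw [Complex.exp_eq_one_iff] at h
    obtain ⟨z, hz⟩ := h
    have hz' : (-(2 * (θ k : ℝ)) : ℂ) = (z:ℂ) * (2 * (π:ℝ)) := by
      have h' : (-(2 * (θ k : ℝ)) : ℂ) * Complex.I = ((z:ℂ) * (2 * (π:ℝ))) * Complex.I := by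
        push_cast
        linear_combination hz
      exact mul_right_cancel₀ Complex.I_ne_zero h'
    have hzr : -(2 * θ k) = (z:ℝ) * (2 * π) := by exact_mod_cast hz'
    have h1 : θ k = -(z:ℝ) * π := by linarith
    have h2 : (0:ℝ) < -(z:ℝ) * π := h1 ▸ hθ0 k
    have h3 : -(z:ℝ) * π < π := h1 ▸ hθπ k
    have hzpos : 0 < -(z:ℝ) := by
      by_contra hcon
      push_neg at hcon
      nlinarith
    have hzlt : -(z:ℝ) < 1 := by
      by_contra hcon
      push_neg at hcon
      nlinarith
    have : (0:ℤ) < -z := by exact_mod_cast hzpos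
    have : (-z:ℤ) < 1 := by exact_mod_cast hzlt
    omega
  have hrinj : Function.Injective r := by
    intro k1 k2 h
    rw [hr] at h
    simp only at h
    rw [Complex.exp_eq_exp_iff_exists_int] at h
    obtain ⟨z, hz⟩ := h
    have hz' : (-(2 * (θ k1 : ℝ)) : ℂ) = (-(2 * (θ k2 : ℝ)) : ℂ) + (z:ℂ) * (2 * (π:ℝ)) := by
      have hI := Complex.I_ne_zero
      have : (-(2 * (θ k1 : ℝ)) : ℂ) * Complex.I
          = ((-(2 * (θ k2 : ℝ)) : ℂ) + (z:ℂ) * (2 * (π:ℝ))) * Complex.I := by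
        rw [hz]; push_cast; ring
      exact mul_right_cancel₀ hI this
    have hzr : -(2 * θ k1) = -(2 * θ k2) + (z:ℝ) * (2 * π) := by exact_mod_cast hz'
    have hθdiff : θ k2 - θ k1 = (z:ℝ) * π := by linarith
    rw [hθ] at hθdiff
    simp only at hθdiff
    have hkk : (k2:ℝ) - (k1:ℝ) = (z:ℝ) * n := by
      have : ((k2:ℝ) * π - (k1:ℝ) * π) / n = (z:ℝ) * π := by
        rw [← hθdiff]; ring_nf
      field_simp at this
      nlinarith [this, hπ0]
    have hzint : (k2:ℤ) - (k1:ℤ) = z * n := by exact_mod_cast hkk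
    have hb1 : (k1:ℤ) < n := by exact_mod_cast k1.isLt
    have hb2 : (k2:ℤ) < n := by exact_mod_cast k2.isLt
    have hb3 : (0:ℤ) ≤ (k1:ℤ) := Int.ofNat_nonneg _
    have hb4 : (0:ℤ) ≤ (k2:ℤ) := Int.ofNat_nonneg _
    have hz0 : z = 0 := by
      rcases lt_trichotomy z 0 with h | h | h
      · nlinarith
      · exact h
      · nlinarith
    rw [hz0] at hzint
    simp at hzint
    exact Fin.ext (by omega)
  -- matrices
  set M : Matrix (Fin n) (Fin n) ℂ := (Real.cot α : ℂ) • J n + B n with hM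
  set V : Matrix (Fin n) (Fin n) ℂ := Matrix.of fun j k => r k ^ (j:ℕ) with hV
  set D : Matrix (Fin n) (Fin n) ℂ := Matrix.diagonal lam with hD
  have hsinα : Real.sin α ≠ 0 := ne_of_gt (Real.sin_pos_of_pos_of_lt_pi hα0 hαπ)
  have hcq : (Real.cot α : ℂ) * (q - 1) = -Complex.I * (q + 1) := cot_rel α hsinα
  have htr : ∀ k : Fin n, lam k * (r k - 1) = -Complex.I * (r k + 1) :=
    fun k => cot_rel (θ k) (hθsin k)
  -- M * V = V * D
  have hMV : M * V = V * D := by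
    ext j k
    rw [Matrix.mul_apply, hD, Matrix.mul_diagonal]
    have hstep : ∀ l : Fin n, M j l * V l k
        = ((Real.cot α : ℂ) + (if (j:ℕ) < (l:ℕ) then Complex.I
            else if (l:ℕ) < (j:ℕ) then -Complex.I else 0)) * r k ^ (l:ℕ) := by
      intro l
      rw [hM, hV]
      simp only [Matrix.add_apply, Matrix.smul_apply, J, B, Matrix.of_apply, smul_eq_mul,
        mul_one, Fin.lt_iff_val_lt_val]
    rw [Finset.sum_congr rfl (fun l _ => hstep l)]
    rw [Fin.sum_univ_eq_sum_range (fun l => ((Real.cot α : ℂ) + (if (j:ℕ) < l then Complex.I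
            else if l < (j:ℕ) then -Complex.I else 0)) * r k ^ l) n]
    have hj1 : (j:ℕ) + 1 ≤ n := j.isLt
    rw [← Finset.sum_range_add_sum_Ico _ hj1, Finset.sum_range_succ]
    have e1 : ∑ l ∈ Finset.range (j:ℕ), ((Real.cot α : ℂ) + (if (j:ℕ) < l then Complex.I
            else if l < (j:ℕ) then -Complex.I else 0)) * r k ^ l
        = ((Real.cot α : ℂ) - Complex.I) * ((r k ^ (j:ℕ) - 1) / (r k - 1)) := by
      rw [← geom_sum_eq (hr1 k) (j:ℕ), Finset.mul_sum]
      apply Finset.sum_congr rfl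
      intro l hl
      rw [Finset.mem_range] at hl
      rw [if_neg (by omega), if_pos hl]
      ring
    have e2 : ∑ l ∈ Finset.Ico ((j:ℕ)+1) n, ((Real.cot α : ℂ) + (if (j:ℕ) < l then Complex.I
            else if l < (j:ℕ) then -Complex.I else 0)) * r k ^ l
        = ((Real.cot α : ℂ) + Complex.I) * ((q - r k ^ (j:ℕ) * r k) / (r k - 1)) := by
      rw [show q - r k ^ (j:ℕ) * r k = r k ^ n - r k ^ ((j:ℕ)+1) by rw [hrn k, pow_succ]]
      rw [← geom_sum_Ico (hr1 k) hj1, Finset.mul_sum]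
      apply Finset.sum_congr rfl
      intro l hl
      rw [Finset.mem_Ico] at hl
      rw [if_pos (by omega)]
    rw [e1, e2]
    have := entry_key (Real.cot α : ℂ) (lam k) (r k) (r k ^ (j:ℕ)) q (hr1 k) hcq (htr k)
    simp only [lt_irrefl, if_false, hV, Matrix.of_apply]
    linear_combination this
  -- V is invertible
  have hdet : IsUnit V.det := by
    have : V = (Matrix.vandermonde r).transpose := by
      ext j k
      simp [hV, Matrix.vandermonde]
    rw [this, Matrix.det_transpose]
    exact isUnit_iff_ne_zero.mpr (Matrix.det_vandermonde_ne_zero_iff.mpr hrinj)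
  have hVV : V * V⁻¹ = 1 := Matrix.mul_nonsing_inv V hdet
  have hVV' : V⁻¹ * V = 1 := Matrix.nonsing_inv_mul V hdet
  have hMeq : M = V * D * V⁻¹ := by
    calc M = M * (V * V⁻¹) := by rw [hVV, mul_one]
    _ = (M * V) * V⁻¹ := by rw [mul_assoc]
    _ = V * D * V⁻¹ := by rw [hMV]
  have hpow : ∀ s : ℕ, M ^ s = V * D ^ s * V⁻¹ := by
    intro s
    induction s with
    | zero => simp [hVV]
    | succ t ih =>
      rw [pow_succ, ih, hMeq, pow_succ]
      calc V * D ^ t * V⁻¹ * (V * D * V⁻¹)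
          = V * D ^ t * (V⁻¹ * V) * D * V⁻¹ := by
            simp only [Matrix.mul_assoc]
        _ = V * (D ^ t * D) * V⁻¹ := by rw [hVV']; simp only [Matrix.mul_assoc, Matrix.mul_one, Matrix.one_mul]
  rw [hpow m]
  rw [Matrix.trace_mul_cycle, hVV', one_mul, hD, Matrix.diagonal_pow, Matrix.trace_diagonal]
  simp only [Complex.ofReal_sum, Complex.ofReal_pow]
  rw [← Fin.sum_univ_eq_sum_range (fun i => ((Real.cot ((α + i * π) / n) : ℝ) : ℂ) ^ m) n]
  apply Finset.sum_congr rfl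
  intro i _
  simp [hlam, hθ, Pi.pow_apply]
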